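/- arXiv:0907.0644 — 4 statements merged into one kernel-verified Lean document; each statement's English description precedes it below -/
import Mathlib

section
/- Let n, m ≥ 1, let X ⊆ ℤ^n be a finite nonempty set, let c ∈ ℤ^n, and let μ_1, …, μ_m : ℤ^n → ℝ satisfy 0 ≤ μ_i(x) ≤ 1 for every x ∈ X and every i. Let S = {(x, z) ∈ X × ℝ : 0 ≤ z ≤ 1 and z ≤ μ_i(x) for all i = 1, …, m}. Then a pair (x*, z*) ∈ S is a nondominated solution of the biobjective maximization problem of ((x,z) ↦ c·x, (x,z) ↦ z) over S if and only if z* = min_{1≤i≤m} μ_i(x*) and x* is a nondominated solution of the biobjective maximization problem of (x ↦ c·x, x ↦ min_{1≤i≤m} μ_i(x)) over X. -/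
/-- `s` is a nondominated solution of the multiobjective maximization problem of the
objective functions `f i` over the feasible set `S`: `s ∈ S` and there is no `t ∈ S`
with `f i s ≤ f i t` for all `i` and `f j s < f j t` for some `j`. -/
def Nondominated {σ ι : Type*} (S : Set σ) (f : ι → σ → ℝ) (s : σ) : Prop :=
  s ∈ S ∧ ¬ ∃ t ∈ S, (∀ i, f i s ≤ f i t) ∧ (∃ j, f j s < f j t)

theorem stmt0 (n m : ℕ) (hn : 1 ≤ n) (hm : 1 ≤ m)
    (X : Set (Fin n → ℤ)) (hXfin : X.Finite) (hXne : X.Nonempty)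
    (c : Fin n → ℤ) (μ : Fin m → (Fin n → ℤ) → ℝ)
    (hμ : ∀ x ∈ X, ∀ i, 0 ≤ μ i x ∧ μ i x ≤ 1)
    (S : Set ((Fin n → ℤ) × ℝ))
    (hS : S = {p | p.1 ∈ X ∧ 0 ≤ p.2 ∧ p.2 ≤ 1 ∧ ∀ i, p.2 ≤ μ i p.1})
    (minμ : (Fin n → ℤ) → ℝ)
    (hminμ : ∀ x, minμ x =
      Finset.univ.inf' (Finset.univ_nonempty_iff.mpr (Fin.pos_iff_nonempty.mp hm))
        (fun i => μ i x))
    (p : (Fin n → ℤ) × ℝ) (hp : p ∈ S) :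
    Nondominated S ![fun q => ∑ j, (c j : ℝ) * q.1 j, fun q => q.2] p ↔
      (p.2 = minμ p.1 ∧
        Nondominated X ![fun x => ∑ j, (c j : ℝ) * x j, fun x => minμ x] p.1) := by
  have hne : (Finset.univ : Finset (Fin m)).Nonempty :=
    Finset.univ_nonempty_iff.mpr (Fin.pos_iff_nonempty.mp hm)
  -- minμ x ≤ μ i x
  have hmin_le : ∀ x i, minμ x ≤ μ i x := by
    intro x i
    rw [hminμ]
    exact Finset.inf'_le _ (Finset.mem_univ i)
  -- z ≤ μ i x for all i implies z ≤ minμ x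
  have hle_min : ∀ x (z : ℝ), (∀ i, z ≤ μ i x) → z ≤ minμ x := by
    intro x z h
    rw [hminμ]
    exact Finset.le_inf' hne _ fun i _ => h i
  -- membership criterion
  have hmem : ∀ x ∈ X, (x, minμ x) ∈ S := by
    intro x hx
    rw [hS]
    refine ⟨hx, ?_, ?_, fun i => hmin_le x i⟩
    · rw [hminμ]; exact Finset.le_inf' hne _ fun i _ => (hμ x hx i).1
    · rcases hne with ⟨i, _⟩
      exact le_trans (hmin_le x i) (hμ x hx i).2
  rw [hS] at hp
  obtain ⟨hpX, hp0, hp1, hpμ⟩ := hp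
  have hple : p.2 ≤ minμ p.1 := hle_min _ _ hpμ
  constructor
  · rintro ⟨hpS, hnd⟩
    have heq : p.2 = minμ p.1 := by
      by_contra hne'
      have hlt : p.2 < minμ p.1 := lt_of_le_of_ne hple hne'
      exact hnd ⟨(p.1, minμ p.1), hmem p.1 hpX, by
        intro i
        fin_cases i
        · simp
        · simpa using hple, ⟨1, by simpa using hlt⟩⟩
    refine ⟨heq, hpX, ?_⟩
    rintro ⟨t, htX, hall, j, hj⟩
    refine hnd ⟨(t, minμ t), hmem t htX, ?_, ?_⟩
    · intro i
      fin_cases i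
      · simpa using hall 0
      · simp only [Matrix.cons_val_one, Matrix.head_cons]
        calc p.2 = minμ p.1 := heq
        _ ≤ minμ t := by simpa using hall 1
    · refine ⟨j, ?_⟩
      fin_cases j
      · simpa using hj
      · simp only [Matrix.cons_val_one, Matrix.head_cons]
        calc p.2 = minμ p.1 := heq
        _ < minμ t := by simpa using hj
  · rintro ⟨heq, hxX, hnd⟩
    refine ⟨by rw [hS]; exact ⟨hpX, hp0, hp1, hpμ⟩, ?_⟩
    rintro ⟨⟨t, w⟩, htS, hall, j, hj⟩
    rw [hS] at htS
    obtain ⟨htX, hw0, hw1, hwμ⟩ := htS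
    have hwmin : w ≤ minμ t := hle_min _ _ hwμ
    refine hnd ⟨t, htX, ?_, ?_⟩
    · intro i
      fin_cases i
      · simpa using hall 0
      · simp only [Matrix.cons_val_one, Matrix.head_cons]
        calc minμ p.1 = p.2 := heq.symm
        _ ≤ w := by simpa using hall 1
        _ ≤ minμ t := hwmin
    · refine ⟨j, ?_⟩
      fin_cases j
      · simpa using hj
      · simp only [Matrix.cons_val_one, Matrix.head_cons]
        calc minμ p.1 = p.2 := heq.symm
        _ < w := by simpa using hj
        _ ≤ minμ t := hwmin
end

section
/- Let n, m ≥ 1, let X ⊆ ℤ^n be a finite nonempty set, let c ∈ ℤ^n, let a_1, …, a_m ∈ ℤ^n, b_1, …, b_m ∈ ℤ, d_1, …, d_m ∈ ℤ with d_i > 0, and define μ_i(x) = (b_i − a_i·x)/d_i; assume 0 ≤ μ_i(x) ≤ 1 for all x ∈ X and all i. Let M be a positive integer divisible by every d_i. Let S = {(x, z) ∈ X × ℝ : 0 ≤ z ≤ 1 and z ≤ μ_i(x) for all i} and T = {(x, y) ∈ X × ℤ : 0 ≤ y ≤ M and y ≤ M·μ_i(x) for all i}. Then (x, z) is a nondominated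 solution of the biobjective maximization problem of ((x,z) ↦ c·x, (x,z) ↦ z) over S if and only if M·z ∈ ℤ and (x, M·z) is a nondominated solution of the biobjective maximization problem of ((x,y) ↦ c·x, (x,y) ↦ y) over T; moreover the map (x, z) ↦ (x, M·z) is a bijection between the two sets of nondominated solutions. -/
theorem stmt3 (n m : ℕ) (hn : 1 ≤ n) (hm : 1 ≤ m)
    (X : Set (Fin n → ℤ)) (hXfin : X.Finite) (hXne : X.Nonempty)
    (c : Fin n → ℤ)
    (a : Fin m → Fin n → ℤ) (b : Fin m → ℤ) (d : Fin m → ℤ) (hd : ∀ i, 0 < d i)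
    (μ : Fin m → (Fin n → ℤ) → ℝ)
    (hμdef : ∀ i x, μ i x = ((b i : ℝ) - ∑ j, (a i j : ℝ) * (x j : ℝ)) / (d i : ℝ))
    (hμ01 : ∀ x ∈ X, ∀ i, 0 ≤ μ i x ∧ μ i x ≤ 1)
    (M : ℤ) (hM : 0 < M) (hdiv : ∀ i, d i ∣ M)
    (S : Set ((Fin n → ℤ) × ℝ))
    (hS : S = {p | p.1 ∈ X ∧ 0 ≤ p.2 ∧ p.2 ≤ 1 ∧ ∀ i, p.2 ≤ μ i p.1})
    (T : Set ((Fin n → ℤ) × ℤ))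
    (hT : T = {p | p.1 ∈ X ∧ 0 ≤ p.2 ∧ p.2 ≤ M ∧ ∀ i, (p.2 : ℝ) ≤ (M : ℝ) * μ i p.1}) :
    (∀ x : Fin n → ℤ, ∀ z : ℝ,
      (Nondominated S ![fun q => ∑ j, (c j : ℝ) * q.1 j, fun q => q.2] (x, z) ↔
        ∃ y : ℤ, (y : ℝ) = (M : ℝ) * z ∧
          Nondominated T ![fun q => ∑ j, (c j : ℝ) * q.1 j, fun q => (q.2 : ℝ)] (x, y))) ∧
    Set.BijOn (fun p : (Fin n → ℤ) × ℝ => (p.1, (M : ℝ) * p.2))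
      {p | Nondominated S ![fun q => ∑ j, (c j : ℝ) * q.1 j, fun q => q.2] p}
      ((fun q : (Fin n → ℤ) × ℤ => (q.1, (q.2 : ℝ))) ''
        {q | Nondominated T ![fun q => ∑ j, (c j : ℝ) * q.1 j, fun q => (q.2 : ℝ)] q}) := by
  
  haveI : Nonempty (Fin m) := ⟨⟨0, hm⟩⟩
  have hMR : (0:ℝ) < (M:ℝ) := by exact_mod_cast hM
  have hMne : (M:ℝ) ≠ 0 := ne_of_gt hMR
  set ν : Fin m → (Fin n → ℤ) → ℤ :=
    fun i x => (M / d i) * (b i - ∑ j, a i j * x j) with hνdef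
  have hνμ : ∀ i x, ((ν i x : ℤ) : ℝ) = (M : ℝ) * μ i x := by
    intro i x
    obtain ⟨k, hk⟩ := hdiv i
    have hdne : (d i : ℝ) ≠ 0 := by exact_mod_cast (hd i).ne'
    simp only [hνdef, hμdef, hk, Int.mul_ediv_cancel_left _ (hd i).ne']
    push_cast
    field_simp
  set Y : (Fin n → ℤ) → ℤ :=
    fun x => Finset.univ.inf' Finset.univ_nonempty (fun i => ν i x) with hYdef
  have hYle : ∀ x i, Y x ≤ ν i x := fun x i => Finset.inf'_le _ (Finset.mem_univ i)
  have hYw : ∀ x, ∃ i, Y x = ν i x := by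
    intro x
    obtain ⟨i, _, h⟩ := Finset.exists_mem_eq_inf' Finset.univ_nonempty (fun i => ν i x)
    exact ⟨i, h⟩
  have hYT : ∀ x ∈ X, (x, Y x) ∈ T := by
    intro x hx
    obtain ⟨i0, hi0⟩ := hYw x
    rw [hT]
    refine ⟨hx, ?_, ?_, ?_⟩
    · have h : (0:ℝ) ≤ (Y x : ℝ) := by
        rw [hi0, hνμ]
        exact mul_nonneg hMR.le (hμ01 x hx i0).1
      exact_mod_cast h
    · have h : (Y x : ℝ) ≤ (M:ℝ) := by
        rw [hi0, hνμ]
        calc (M:ℝ) * μ i0 x ≤ (M:ℝ) * 1 :=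
              mul_le_mul_of_nonneg_left (hμ01 x hx i0).2 hMR.le
          _ = M := mul_one _
      exact_mod_cast h
    · intro i
      calc (Y x : ℝ) ≤ ((ν i x : ℤ) : ℝ) := by exact_mod_cast hYle x i
        _ = (M:ℝ) * μ i x := hνμ i x
  have hMzY : ∀ x' z', (x', z') ∈ S → (M:ℝ) * z' ≤ (Y x' : ℝ) := by
    intro x' z' hmem
    rw [hS] at hmem
    obtain ⟨hx', _, _, hz'μ⟩ := hmem
    obtain ⟨i0, hi0⟩ := hYw x'
    rw [hi0, hνμ]
    exact mul_le_mul_of_nonneg_left (hz'μ i0) hMR.le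
  have hTS : ∀ x y, (x, y) ∈ T → (x, (y:ℝ)/(M:ℝ)) ∈ S := by
    intro x y hmem
    rw [hT] at hmem
    obtain ⟨hx, h0, hMy, hμy⟩ := hmem
    rw [hS]
    refine ⟨hx, ?_, ?_, ?_⟩
    · exact div_nonneg (by exact_mod_cast h0) hMR.le
    · rw [div_le_one hMR]; exact_mod_cast hMy
    · intro i
      rw [div_le_iff₀ hMR]
      calc (y:ℝ) ≤ (M:ℝ) * μ i x := hμy i
        _ = μ i x * M := mul_comm _ _
  have key : ∀ x : Fin n → ℤ, ∀ z : ℝ,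
      (Nondominated S ![fun q => ∑ j, (c j : ℝ) * q.1 j, fun q => q.2] (x, z) ↔
        ∃ y : ℤ, (y : ℝ) = (M : ℝ) * z ∧
          Nondominated T ![fun q => ∑ j, (c j : ℝ) * q.1 j, fun q => (q.2 : ℝ)] (x, y)) := by
    intro x z
    constructor
    · rintro ⟨hmem, hdom⟩
      have hxX : x ∈ X := by
        have h := hmem; rw [hS] at h; exact h.1
      have hle : (M:ℝ) * z ≤ (Y x : ℝ) := hMzY x z hmem
      have hge : (Y x : ℝ) ≤ (M:ℝ) * z := by
        by_contra hlt
        push_neg at hlt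
        apply hdom
        refine ⟨(x, (Y x : ℝ)/(M:ℝ)), hTS x (Y x) (hYT x hxX), ?_, ?_⟩
        · intro i
          fin_cases i
          · simp
          · show z ≤ (Y x : ℝ) / (M:ℝ)
            rw [le_div_iff₀ hMR]
            nlinarith
        · refine ⟨1, ?_⟩
          show z < (Y x : ℝ) / (M:ℝ)
          rw [lt_div_iff₀ hMR]
          nlinarith
      have hMz : (M:ℝ) * z = (Y x : ℝ) := le_antisymm hle hge
      refine ⟨Y x, hMz.symm, hYT x hxX, ?_⟩
      rintro ⟨⟨x', y'⟩, ht, hall, j, hj⟩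
      apply hdom
      have h0 := hall 0
      have h1 := hall 1
      simp only [Matrix.cons_val_zero, Matrix.cons_val_one, Matrix.head_cons] at h0 h1
      refine ⟨(x', (y':ℝ)/(M:ℝ)), hTS x' y' ht, ?_, ?_⟩
      · intro i
        fin_cases i
        · simpa using h0
        · show z ≤ (y' : ℝ) / (M:ℝ)
          rw [le_div_iff₀ hMR]
          have h2 : (Y x : ℝ) ≤ (y' : ℝ) := h1
          nlinarith
      · fin_cases j
        · refine ⟨0, ?_⟩
          simpa using hj
        · refine ⟨1, ?_⟩
          have h2 : (Y x : ℝ) < (y' : ℝ) := hj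
          show z < (y' : ℝ) / (M:ℝ)
          rw [lt_div_iff₀ hMR]
          nlinarith
    · rintro ⟨y, hy, hmemT, hndT⟩
      have hz : z = (y:ℝ)/(M:ℝ) := by
        field_simp
        linarith [hy]
      constructor
      · rw [hz]; exact hTS x y hmemT
      · rintro ⟨⟨x', z'⟩, hs', hall, j, hj⟩
        have hx'X : x' ∈ X := by
          have h := hs'; rw [hS] at h; exact h.1
        have h0 := hall 0
        have h1 := hall 1
        simp only [Matrix.cons_val_zero, Matrix.cons_val_one, Matrix.head_cons] at h0 h1
        apply hndT
        have hzY : (M:ℝ) * z' ≤ (Y x' : ℝ) := hMzY x' z' hs'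
        refine ⟨(x', Y x'), hYT x' hx'X, ?_, ?_⟩
        · intro i
          fin_cases i
          · simpa using h0
          · show (y:ℝ) ≤ (Y x' : ℝ)
            rw [hy]
            nlinarith
        · fin_cases j
          · refine ⟨0, ?_⟩
            simpa using hj
          · refine ⟨1, ?_⟩
            have h2 : z < z' := hj
            show (y:ℝ) < (Y x' : ℝ)
            rw [hy]
            nlinarith
  refine ⟨key, ?_, ?_, ?_⟩
  · rintro ⟨x, z⟩ hp
    obtain ⟨y, hy, hndT⟩ := (key x z).mp hp
    exact ⟨(x, y), hndT, by simp [hy]⟩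
  · rintro ⟨x, z⟩ _ ⟨x', z'⟩ _ h
    have h1 : x = x' := congrArg Prod.fst h
    have h2 : (M:ℝ) * z = (M:ℝ) * z' := congrArg Prod.snd h
    exact Prod.ext h1 (mul_left_cancel₀ hMne h2)
  · rintro ⟨w1, w2⟩ ⟨⟨x0, y⟩, hnd, heq⟩
    have he1 : x0 = w1 := congrArg Prod.fst heq
    have he2 : (y:ℝ) = w2 := congrArg Prod.snd heq
    subst he1
    subst he2
    refine ⟨(x0, (y:ℝ)/(M:ℝ)), ?_, ?_⟩
    · exact (key x0 ((y:ℝ)/(M:ℝ))).mpr ⟨y, by field_simp, hnd⟩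
    · show (x0, (M:ℝ) * ((y:ℝ)/(M:ℝ))) = (x0, (y:ℝ))
      rw [mul_div_cancel₀ _ hMne]
end

section
/- Let n ≥ 1, k ≥ 1, let X ⊆ ℝ^n be a set, let 0 = α_0 < α_1 < ⋯ < α_k = 1 be a partition of [0,1], and for each i = 1, …, n let c_{i1}, c_{i2} : [0,1] → ℝ be functions that are affine on each subinterval [α_{j−1}, α_j]. For x ∈ X and α ∈ [0,1] define L_α(x) = Σ_{i=1}^n c_{i1}(α) x_i and U_α(x) = Σ_{i=1}^n c_{i2}(α) x_i. Say that y ∈ X dominates x ∈ X in the fuzzy ordering if L_α(x) ≤ L_α(y) and U_α(x) ≤ U_α(y) for every α ∈ [0,1], with L_α(x) < L_α(y) or U_α(x) < U_α(y) for at least one α ∈ [0,1]. Then x ∈ X is not dominated by any y ∈ X in the fuzzy ordering if and only if x is a nondominated solution of the 2(k+1)-objective maximization problem of (L_{α_0}, U_{α_0}, L_{α_1}, U_{α_1}, …, L_{α_k}, U_{α_k}) over X. -/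
private lemma aff_nonneg' {s t a b β : ℝ} (hab : a ≤ β) (hβb : β ≤ b)
    (ha : 0 ≤ s * a + t) (hb : 0 ≤ s * b + t) : 0 ≤ s * β + t := by
  rcases le_total 0 s with hs | hs
  · nlinarith
  · nlinarith

private lemma aff_zero' {s t a b β : ℝ} (hab : a < b)
    (ha : s * a + t = 0) (hb : s * b + t = 0) : s * β + t = 0 := by
  have hs0 : s * (b - a) = 0 := by ring_nf; linarith
  have hs : s = 0 := by
    rcases mul_eq_zero.mp hs0 with h | h
    · exact h
    · exfalso; linarith
  subst hs; simpa using ha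

private lemma piece_exists {k : ℕ} (hk : 1 ≤ k) (α : Fin (k + 1) → ℝ)
    (hmono : StrictMono α) (hα0 : α 0 = 0) (hαk : α (Fin.last k) = 1)
    {β : ℝ} (hβ : β ∈ Set.Icc (0 : ℝ) 1) :
    ∃ j : Fin k, α j.castSucc ≤ β ∧ β ≤ α j.succ := by
  classical
  set S : Finset (Fin (k + 1)) := Finset.univ.filter (fun j => α j ≤ β) with hS
  have h0 : (0 : Fin (k + 1)) ∈ S := by simp [hS, hα0, hβ.1]
  have hne : S.Nonempty := ⟨0, h0⟩
  set m := S.max' hne with hm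
  have hmS : m ∈ S := S.max'_mem hne
  have hαm : α m ≤ β := by simpa [hS] using hmS
  by_cases hlt : (m : ℕ) < k
  · refine ⟨⟨m, hlt⟩, ?_, ?_⟩
    · have hcm : (⟨(m : ℕ), hlt⟩ : Fin k).castSucc = m := by
        ext; simp
      rw [hcm]; exact hαm
    · by_contra h
      push_neg at h
      have hmem : (⟨(m : ℕ), hlt⟩ : Fin k).succ ∈ S := by
        simp only [hS, Finset.mem_filter, Finset.mem_univ, true_and]
        linarith
      have hle := S.le_max' _ hmem
      rw [← hm] at hle
      rw [Fin.le_def] at hle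
      simp [Fin.succ] at hle
  · have hmk : (m : ℕ) = k := by omega
    have hml : m = Fin.last k := by ext; simpa using hmk
    have hβ1 : β = 1 := le_antisymm hβ.2 (by rw [← hαk, ← hml]; exact hαm)
    refine ⟨⟨k - 1, by omega⟩, ?_, ?_⟩
    · have h1 : α (⟨k - 1, by omega⟩ : Fin k).castSucc ≤ α (Fin.last k) :=
        hmono.monotone (Fin.le_last _)
      rw [hαk] at h1; linarith
    · have h2 : (⟨k - 1, by omega⟩ : Fin k).succ = Fin.last k := by
        ext; simp; omega
      rw [h2, hαk]; linarith

theorem stmt11 (n k : ℕ) (hn : 1 ≤ n) (hk : 1 ≤ k)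
    (X : Set (Fin n → ℝ))
    (α : Fin (k + 1) → ℝ) (hα0 : α 0 = 0) (hαk : α (Fin.last k) = 1)
    (hmono : StrictMono α)
    (c1 c2 : Fin n → ℝ → ℝ)
    (haff1 : ∀ i, ∀ j : Fin k, ∃ s t : ℝ,
      ∀ β ∈ Set.Icc (α j.castSucc) (α j.succ), c1 i β = s * β + t)
    (haff2 : ∀ i, ∀ j : Fin k, ∃ s t : ℝ,
      ∀ β ∈ Set.Icc (α j.castSucc) (α j.succ), c2 i β = s * β + t)
    (L U : ℝ → (Fin n → ℝ) → ℝ)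
    (hL : ∀ β x, L β x = ∑ i, c1 i β * x i)
    (hU : ∀ β x, U β x = ∑ i, c2 i β * x i)
    (x : Fin n → ℝ) (hx : x ∈ X) :
    (¬ ∃ y ∈ X,
        (∀ β ∈ Set.Icc (0 : ℝ) 1, L β x ≤ L β y ∧ U β x ≤ U β y) ∧
        (∃ β ∈ Set.Icc (0 : ℝ) 1, L β x < L β y ∨ U β x < U β y)) ↔
      Nondominated X
        (fun jb : Fin (k + 1) × Bool => fun z =>
          if jb.2 then U (α jb.1) z else L (α jb.1) z) x := by
  classical
  have hαmem : ∀ j : Fin (k + 1), α j ∈ Set.Icc (0 : ℝ) 1 := by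
    intro j
    exact ⟨by rw [← hα0]; exact hmono.monotone (Fin.zero_le j),
      by rw [← hαk]; exact hmono.monotone (Fin.le_last j)⟩
  have hab : ∀ j : Fin k, α j.castSucc < α j.succ := by
    intro j; exact hmono Fin.castSucc_lt_succ
  -- affine differences
  have haffL : ∀ y : Fin n → ℝ, ∀ j : Fin k, ∃ s t : ℝ,
      ∀ β ∈ Set.Icc (α j.castSucc) (α j.succ), L β y - L β x = s * β + t := by
    intro y j
    choose s t hst using fun i => haff1 i j
    refine ⟨∑ i, s i * (y i - x i), ∑ i, t i * (y i - x i), fun β hβ => ?_⟩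
    rw [hL, hL, ← Finset.sum_sub_distrib, Finset.sum_mul, ← Finset.sum_add_distrib]
    refine Finset.sum_congr rfl fun i _ => ?_
    rw [hst i β hβ]; ring
  have haffU : ∀ y : Fin n → ℝ, ∀ j : Fin k, ∃ s t : ℝ,
      ∀ β ∈ Set.Icc (α j.castSucc) (α j.succ), U β y - U β x = s * β + t := by
    intro y j
    choose s t hst using fun i => haff2 i j
    refine ⟨∑ i, s i * (y i - x i), ∑ i, t i * (y i - x i), fun β hβ => ?_⟩
    rw [hU, hU, ← Finset.sum_sub_distrib, Finset.sum_mul, ← Finset.sum_add_distrib]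
    refine Finset.sum_congr rfl fun i _ => ?_
    rw [hst i β hβ]; ring
  constructor
  · intro h
    refine ⟨hx, ?_⟩
    rintro ⟨y, hy, hle, jb, hlt⟩
    apply h
    refine ⟨y, hy, ?_, ?_⟩
    · intro β hβ
      obtain ⟨j, hj1, hj2⟩ := piece_exists hk α hmono hα0 hαk hβ
      obtain ⟨s, t, hst⟩ := haffL y j
      obtain ⟨s', t', hst'⟩ := haffU y j
      have hLa : L (α j.castSucc) x ≤ L (α j.castSucc) y := by
        simpa using hle (j.castSucc, false)
      have hLb : L (α j.succ) x ≤ L (α j.succ) y := by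
        simpa using hle (j.succ, false)
      have hUa : U (α j.castSucc) x ≤ U (α j.castSucc) y := by
        simpa using hle (j.castSucc, true)
      have hUb : U (α j.succ) x ≤ U (α j.succ) y := by
        simpa using hle (j.succ, true)
      have hab' := (hab j).le
      constructor
      · have h1 := hst (α j.castSucc) ⟨le_refl _, hab'⟩
        have h2 := hst (α j.succ) ⟨hab', le_refl _⟩
        have h3 := hst β ⟨hj1, hj2⟩
        have := aff_nonneg' (s := s) (t := t) hj1 hj2 (by linarith) (by linarith)
        linarith
      · have h1 := hst' (α j.castSucc) ⟨le_refl _, hab'⟩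
        have h2 := hst' (α j.succ) ⟨hab', le_refl _⟩
        have h3 := hst' β ⟨hj1, hj2⟩
        have := aff_nonneg' (s := s') (t := t') hj1 hj2 (by linarith) (by linarith)
        linarith
    · refine ⟨α jb.1, hαmem jb.1, ?_⟩
      rcases jb with ⟨j, b⟩
      cases b
      · left; simpa using hlt
      · right; simpa using hlt
  · rintro ⟨-, h⟩ ⟨y, hy, hle, β, hβ, hstrict⟩
    apply h
    refine ⟨y, hy, ?_, ?_⟩
    · rintro ⟨j, b⟩
      cases b
      · simpa using (hle (α j) (hαmem j)).1
      · simpa using (hle (α j) (hαmem j)).2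
    · obtain ⟨j, hj1, hj2⟩ := piece_exists hk α hmono hα0 hαk hβ
      have hab' := (hab j).le
      have hLa : L (α j.castSucc) x ≤ L (α j.castSucc) y :=
        (hle _ (hαmem j.castSucc)).1
      have hLb : L (α j.succ) x ≤ L (α j.succ) y := (hle _ (hαmem j.succ)).1
      have hUa : U (α j.castSucc) x ≤ U (α j.castSucc) y :=
        (hle _ (hαmem j.castSucc)).2
      have hUb : U (α j.succ) x ≤ U (α j.succ) y := (hle _ (hαmem j.succ)).2
      rcases hstrict with hs | hs
      · obtain ⟨s, t, hst⟩ := haffL y j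
        have h1 := hst (α j.castSucc) ⟨le_refl _, hab'⟩
        have h2 := hst (α j.succ) ⟨hab', le_refl _⟩
        have h3 := hst β ⟨hj1, hj2⟩
        by_cases hca : L (α j.castSucc) x < L (α j.castSucc) y
        · exact ⟨(j.castSucc, false), by simpa using hca⟩
        by_cases hcb : L (α j.succ) x < L (α j.succ) y
        · exact ⟨(j.succ, false), by simpa using hcb⟩
        exfalso
        have := aff_zero' (s := s) (t := t) (a := α j.castSucc) (b := α j.succ) (β := β)
          (hab j) (by linarith) (by linarith)
        linarith
      · obtain ⟨s, t, hst⟩ := haffU y j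
        have h1 := hst (α j.castSucc) ⟨le_refl _, hab'⟩
        have h2 := hst (α j.succ) ⟨hab', le_refl _⟩
        have h3 := hst β ⟨hj1, hj2⟩
        by_cases hca : U (α j.castSucc) x < U (α j.castSucc) y
        · exact ⟨(j.castSucc, true), by simpa using hca⟩
        by_cases hcb : U (α j.succ) x < U (α j.succ) y
        · exact ⟨(j.succ, true), by simpa using hcb⟩
        exfalso
        have := aff_zero' (s := s) (t := t) (a := α j.castSucc) (b := α j.succ) (β := β)
          (hab j) (by linarith) (by linarith)
        linarith
end

section
/- Let n, m ≥ 1, k ≥ 1, let X ⊆ ℤ^n be a finite nonempty set, let a_1, …, a_m ∈ ℤ^n, b_1, …, b_m ∈ ℤ, d_1, …, d_m ∈ ℤ with d_i > 0, define μ_i(x) = (b_i − a_i·x)/d_i and assume 0 ≤ μ_i(x) ≤ 1 for all x ∈ X and all i; let M be a positive integer divisible by every d_i. Let 0 = α_0 < α_1 < ⋯ < α_k = 1 and for each i = 1, …, n let c_{i1}, c_{i2} : [0,1] → ℝ be affine on each subinterval [α_{j−1}, α_j]; set L_α(x) = Σ_i c_{i1}(α) x_i and U_α(x) = Σ_i c_{i2}(α)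 x_i. Say that y ∈ X dominates x ∈ X in the combined fuzzy ordering if L_α(x) ≤ L_α(y) and U_α(x) ≤ U_α(y) for every α ∈ [0,1] and min_i μ_i(x) ≤ min_i μ_i(y), with at least one of these inequalities strict for some α or in the membership values. Let T = {(x, y) ∈ X × ℤ : 0 ≤ y ≤ M, y ≤ M·μ_i(x) for all i}. Then x ∈ X is not dominated by any element of X in the combined fuzzy ordering if and only if (x, M·min_{1≤i≤m} μ_i(x)) is a nondominated solution of the (2(k+1)+1)-objective maximization problem of (L_{α_0}, U_{α_0}, …, L_{α_k}, U_{α_k}, (x,y) ↦ y) over T. -/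
private lemma aff_nn {A B l r β : ℝ} (hl : l ≤ β) (hr : β ≤ r)
    (h1 : 0 ≤ A*l+B) (h2 : 0 ≤ A*r+B) : 0 ≤ A*β+B := by
  rcases le_or_gt 0 A with hA | hA
  · nlinarith
  · nlinarith

private lemma aff_pos {A B l r β : ℝ} (hl : l ≤ β) (hr : β ≤ r)
    (h1 : 0 ≤ A*l+B) (h2 : 0 ≤ A*r+B) (h3 : 0 < A*β+B) :
    0 < A*l+B ∨ 0 < A*r+B := by
  by_contra h
  push_neg at h
  have e1 : A*l+B = 0 := le_antisymm h.1 h1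
  have e2 : A*r+B = 0 := le_antisymm h.2 h2
  have h4 : 0 < A*β - A*l := by linarith
  have h5 : 0 < A*β - A*r := by linarith
  nlinarith [mul_pos h4 h5,
    mul_nonneg (mul_nonneg (sq_nonneg A) (sub_nonneg.2 hl)) (sub_nonneg.2 hr)]

theorem stmt14 (n m k : ℕ) (hn : 1 ≤ n) (hm : 1 ≤ m) (hk : 1 ≤ k)
    (X : Set (Fin n → ℤ)) (hXfin : X.Finite) (hXne : X.Nonempty)
    (a : Fin m → Fin n → ℤ) (b : Fin m → ℤ) (d : Fin m → ℤ) (hd : ∀ i, 0 < d i)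
    (μ : Fin m → (Fin n → ℤ) → ℝ)
    (hμdef : ∀ i x, μ i x = ((b i : ℝ) - ∑ j, (a i j : ℝ) * (x j : ℝ)) / (d i : ℝ))
    (hμ01 : ∀ x ∈ X, ∀ i, 0 ≤ μ i x ∧ μ i x ≤ 1)
    (M : ℤ) (hM : 0 < M) (hdiv : ∀ i, d i ∣ M)
    (α : Fin (k + 1) → ℝ) (hα0 : α 0 = 0) (hαk : α (Fin.last k) = 1)
    (hmono : StrictMono α)
    (c1 c2 : Fin n → ℝ → ℝ)
    (haff1 : ∀ i, ∀ j : Fin k, ∃ s t : ℝ,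
      ∀ β ∈ Set.Icc (α j.castSucc) (α j.succ), c1 i β = s * β + t)
    (haff2 : ∀ i, ∀ j : Fin k, ∃ s t : ℝ,
      ∀ β ∈ Set.Icc (α j.castSucc) (α j.succ), c2 i β = s * β + t)
    (L U : ℝ → (Fin n → ℤ) → ℝ)
    (hL : ∀ β x, L β x = ∑ i, c1 i β * (x i : ℝ))
    (hU : ∀ β x, U β x = ∑ i, c2 i β * (x i : ℝ))
    (minμ : (Fin n → ℤ) → ℝ)
    (hminμ : ∀ x, minμ x =
      Finset.univ.inf' (Finset.univ_nonempty_iff.mpr (Fin.pos_iff_nonempty.mp hm))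
        (fun i => μ i x))
    (T : Set ((Fin n → ℤ) × ℤ))
    (hT : T = {p | p.1 ∈ X ∧ 0 ≤ p.2 ∧ p.2 ≤ M ∧ ∀ i, (p.2 : ℝ) ≤ (M : ℝ) * μ i p.1})
    (x : Fin n → ℤ) (hx : x ∈ X)
    (yx : ℤ) (hyx : (yx : ℝ) = (M : ℝ) * minμ x) :
    (¬ ∃ y ∈ X,
        ((∀ β ∈ Set.Icc (0 : ℝ) 1, L β x ≤ L β y ∧ U β x ≤ U β y) ∧ minμ x ≤ minμ y) ∧
        ((∃ β ∈ Set.Icc (0 : ℝ) 1, L β x < L β y ∨ U β x < U β y) ∨ minμ x < minμ y)) ↔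
      Nondominated T
        (fun o : Option (Fin (k + 1) × Bool) => fun p =>
          match o with
          | none => (p.2 : ℝ)
          | some jb => if jb.2 then U (α jb.1) p.1 else L (α jb.1) p.1)
        (x, yx) := by
  classical
  have hMR : (0:ℝ) < (M:ℝ) := by exact_mod_cast hM
  have hαmem : ∀ j : Fin (k+1), α j ∈ Set.Icc (0:ℝ) 1 := by
    intro j
    constructor
    · rw [← hα0]; exact hmono.monotone (Fin.zero_le j)
    · rw [← hαk]; exact hmono.monotone (Fin.le_last j)
  -- coverage of [0,1] by the subintervals
  have hcover : ∀ β ∈ Set.Icc (0:ℝ) 1, ∃ j : Fin k, α j.castSucc ≤ β ∧ β ≤ α j.succ := by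
    intro β hβ
    have h0 : α 0 ≤ β := by rw [hα0]; exact hβ.1
    set s : Finset (Fin (k+1)) := Finset.univ.filter (fun j => α j ≤ β) with hs
    have hsne : s.Nonempty := ⟨0, by simp [hs, h0]⟩
    have hj'mem : s.max' hsne ∈ s := s.max'_mem hsne
    have hj'le : α (s.max' hsne) ≤ β := (Finset.mem_filter.mp hj'mem).2
    by_cases hlast : s.max' hsne = Fin.last k
    · have hβ1 : β = 1 := le_antisymm hβ.2 (by rw [← hαk, ← hlast]; exact hj'le)
      refine ⟨⟨k - 1, by omega⟩, ?_, ?_⟩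
      · have : α (Fin.castSucc ⟨k - 1, by omega⟩) ≤ α (Fin.last k) :=
          hmono.monotone (Fin.le_last _)
        rw [hαk] at this; exact le_of_le_of_eq this hβ1.symm
      · have hsucc : (⟨k - 1, by omega⟩ : Fin k).succ = Fin.last k := by
          ext; simp [Fin.last]; omega
        rw [hsucc, hαk, hβ1]
    · obtain ⟨j, hj⟩ := Fin.exists_castSucc_eq.mpr hlast
      refine ⟨j, by rw [hj]; exact hj'le, ?_⟩
      by_contra hc
      push_neg at hc
      have hmem : j.succ ∈ s := Finset.mem_filter.mpr ⟨Finset.mem_univ _, hc.le⟩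
      have := s.le_max' _ hmem
      rw [← hj] at this
      exact absurd (lt_of_le_of_lt this (Fin.castSucc_lt_succ (i := j))) (lt_irrefl _)
  -- piecewise-affine transfer lemma
  have hpiece : ∀ g : ℝ → ℝ,
      (∀ j : Fin k, ∃ A B : ℝ, ∀ β ∈ Set.Icc (α j.castSucc) (α j.succ), g β = A*β+B) →
      (∀ j : Fin (k+1), 0 ≤ g (α j)) →
      (∀ β ∈ Set.Icc (0:ℝ) 1, 0 ≤ g β) ∧
      (∀ β ∈ Set.Icc (0:ℝ) 1, 0 < g β → ∃ j : Fin (k+1), 0 < g (α j)) := by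
    intro g hg hnn
    constructor
    · intro β hβ
      obtain ⟨j, h1, h2⟩ := hcover β hβ
      obtain ⟨A, B, hAB⟩ := hg j
      have hlr : α j.castSucc ≤ α j.succ := (hmono (Fin.castSucc_lt_succ (i := j))).le
      have el := hAB (α j.castSucc) ⟨le_refl _, hlr⟩
      have er := hAB (α j.succ) ⟨hlr, le_refl _⟩
      have eβ := hAB β ⟨h1, h2⟩
      rw [eβ]
      exact aff_nn h1 h2 (el ▸ hnn j.castSucc) (er ▸ hnn j.succ)
    · intro β hβ hpos
      obtain ⟨j, h1, h2⟩ := hcover β hβ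
      obtain ⟨A, B, hAB⟩ := hg j
      have hlr : α j.castSucc ≤ α j.succ := (hmono (Fin.castSucc_lt_succ (i := j))).le
      have el := hAB (α j.castSucc) ⟨le_refl _, hlr⟩
      have er := hAB (α j.succ) ⟨hlr, le_refl _⟩
      have eβ := hAB β ⟨h1, h2⟩
      rw [eβ] at hpos
      rcases aff_pos h1 h2 (el ▸ hnn j.castSucc) (er ▸ hnn j.succ) hpos with h | h
      · exact ⟨j.castSucc, by rw [el]; exact h⟩
      · exact ⟨j.succ, by rw [er]; exact h⟩
  -- the difference of linear objectives is piecewise affine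
  have hdiff : ∀ (c : Fin n → ℝ → ℝ),
      (∀ i, ∀ j : Fin k, ∃ s t : ℝ,
        ∀ β ∈ Set.Icc (α j.castSucc) (α j.succ), c i β = s * β + t) →
      ∀ (u v : Fin n → ℤ) (j : Fin k), ∃ A B : ℝ,
        ∀ β ∈ Set.Icc (α j.castSucc) (α j.succ),
          (∑ i, c i β * (v i:ℝ)) - (∑ i, c i β * (u i:ℝ)) = A*β+B := by
    intro c hc u v j
    choose s t hst using hc
    refine ⟨∑ i, s i j * ((v i:ℝ) - (u i:ℝ)), ∑ i, t i j * ((v i:ℝ) - (u i:ℝ)), ?_⟩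
    intro β hβ
    rw [← Finset.sum_sub_distrib, Finset.sum_mul, ← Finset.sum_add_distrib]
    refine Finset.sum_congr rfl (fun i _ => ?_)
    rw [hst i j β hβ]
    ring
  have hgL : ∀ u v : Fin n → ℤ, ∀ j : Fin k, ∃ A B : ℝ,
      ∀ β ∈ Set.Icc (α j.castSucc) (α j.succ), L β v - L β u = A*β+B := by
    intro u v j
    obtain ⟨A, B, h⟩ := hdiff c1 haff1 u v j
    exact ⟨A, B, fun β hβ => by rw [hL, hL]; exact h β hβ⟩
  have hgU : ∀ u v : Fin n → ℤ, ∀ j : Fin k, ∃ A B : ℝ,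
      ∀ β ∈ Set.Icc (α j.castSucc) (α j.succ), U β v - U β u = A*β+B := by
    intro u v j
    obtain ⟨A, B, h⟩ := hdiff c2 haff2 u v j
    exact ⟨A, B, fun β hβ => by rw [hU, hU]; exact h β hβ⟩
  -- facts about minμ
  have hmin_le : ∀ z i, minμ z ≤ μ i z := by
    intro z i; rw [hminμ]; exact Finset.inf'_le _ (Finset.mem_univ i)
  have hmin_ex : ∀ z, ∃ i, minμ z = μ i z := by
    intro z; rw [hminμ]
    obtain ⟨i, _, h⟩ := Finset.exists_mem_eq_inf' _ (fun i => μ i z)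
    exact ⟨i, h⟩
  have hle_min : ∀ (z : Fin n → ℤ) (r : ℝ), (∀ i, r ≤ μ i z) → r ≤ minμ z := by
    intro z r h; rw [hminμ]; exact Finset.le_inf' _ _ (fun i _ => h i)
  have hmin0 : ∀ z ∈ X, 0 ≤ minμ z := fun z hz => hle_min z 0 (fun i => (hμ01 z hz i).1)
  have hmin1 : ∀ z ∈ X, minμ z ≤ 1 := by
    intro z hz
    obtain ⟨i, h⟩ := hmin_ex z
    rw [h]; exact (hμ01 z hz i).2
  -- M * minμ is an integer
  have hint : ∀ z : Fin n → ℤ, ∃ w : ℤ, (w:ℝ) = (M:ℝ) * minμ z := by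
    intro z
    obtain ⟨i0, h0⟩ := hmin_ex z
    obtain ⟨e, he⟩ := hdiv i0
    refine ⟨e * (b i0 - ∑ j, a i0 j * z j), ?_⟩
    rw [h0, hμdef]
    have hd0 : (d i0 : ℝ) ≠ 0 := by exact_mod_cast (hd i0).ne'
    have heR : (M:ℝ) = (d i0:ℝ) * (e:ℝ) := by exact_mod_cast he
    rw [heR]
    push_cast
    field_simp
  -- membership in T
  have hTmem : ∀ z ∈ X, ∀ w : ℤ, (w:ℝ) = (M:ℝ) * minμ z → (z, w) ∈ T := by
    intro z hz w hw
    rw [hT]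
    refine ⟨hz, ?_, ?_, ?_⟩
    · have : (0:ℝ) ≤ (w:ℝ) := by rw [hw]; exact mul_nonneg hMR.le (hmin0 z hz)
      exact_mod_cast this
    · have : (w:ℝ) ≤ (M:ℝ) := by rw [hw]; nlinarith [hmin1 z hz]
      exact_mod_cast this
    · intro i
      rw [hw]
      exact mul_le_mul_of_nonneg_left (hmin_le z i) hMR.le
  constructor
  · -- from combined nondominance to crisp nondominance
    intro hnone
    refine ⟨hTmem x hx yx hyx, ?_⟩
    rintro ⟨⟨y', y2⟩, hTy, hle, j0, hlt⟩
    rw [hT] at hTy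
    obtain ⟨hy'X, hy20, hy2M, hy2μ⟩ := hTy
    have hLall : ∀ j : Fin (k+1), L (α j) x ≤ L (α j) y' := fun j => hle (some (j, false))
    have hUall : ∀ j : Fin (k+1), U (α j) x ≤ U (α j) y' := fun j => hle (some (j, true))
    have hy_le : (yx:ℝ) ≤ (y2:ℝ) := hle none
    have hminle : minμ x ≤ minμ y' := by
      have h1 : (M:ℝ) * minμ x ≤ (M:ℝ) * minμ y' := by
        rw [← hyx]
        refine le_trans hy_le ?_
        refine le_trans ?_ (le_of_eq rfl)
        have : (y2:ℝ) ≤ (M:ℝ) * minμ y' := by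
          have h2 : (y2:ℝ) / (M:ℝ) ≤ minμ y' := by
            refine hle_min y' _ (fun i => ?_)
            rw [div_le_iff₀ hMR, mul_comm]
            exact hy2μ i
          calc (y2:ℝ) = (M:ℝ) * ((y2:ℝ) / (M:ℝ)) := by field_simp
            _ ≤ (M:ℝ) * minμ y' := mul_le_mul_of_nonneg_left h2 hMR.le
        exact this
      exact le_of_mul_le_mul_left h1 hMR
    have hLβ : ∀ β ∈ Set.Icc (0:ℝ) 1, L β x ≤ L β y' := by
      intro β hβ
      have := (hpiece (fun β => L β y' - L β x) (hgL x y')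
        (fun j => sub_nonneg.2 (hLall j))).1 β hβ
      linarith
    have hUβ : ∀ β ∈ Set.Icc (0:ℝ) 1, U β x ≤ U β y' := by
      intro β hβ
      have := (hpiece (fun β => U β y' - U β x) (hgU x y')
        (fun j => sub_nonneg.2 (hUall j))).1 β hβ
      linarith
    apply hnone
    refine ⟨y', hy'X, ⟨fun β hβ => ⟨hLβ β hβ, hUβ β hβ⟩, hminle⟩, ?_⟩
    match j0, hlt with
    | none, hlt =>
      right
      have hy_lt : (yx:ℝ) < (y2:ℝ) := hlt
      have h1 : (M:ℝ) * minμ x < (M:ℝ) * minμ y' := by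
        rw [← hyx]
        refine lt_of_lt_of_le hy_lt ?_
        have h2 : (y2:ℝ) / (M:ℝ) ≤ minμ y' := by
          refine hle_min y' _ (fun i => ?_)
          rw [div_le_iff₀ hMR, mul_comm]
          exact hy2μ i
        calc (y2:ℝ) = (M:ℝ) * ((y2:ℝ) / (M:ℝ)) := by field_simp
          _ ≤ (M:ℝ) * minμ y' := mul_le_mul_of_nonneg_left h2 hMR.le
      exact lt_of_mul_lt_mul_left h1 hMR.le
    | some (j, false), hlt =>
      exact Or.inl ⟨α j, hαmem j, Or.inl hlt⟩
    | some (j, true), hlt =>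
      exact Or.inl ⟨α j, hαmem j, Or.inr hlt⟩
  · -- from crisp nondominance to combined nondominance
    intro hnd
    rintro ⟨y, hyX, ⟨hall, hminle⟩, hstrict⟩
    obtain ⟨y2, hy2⟩ := hint y
    apply hnd.2
    refine ⟨(y, y2), hTmem y hyX y2 hy2, ?_, ?_⟩
    · intro o
      match o with
      | none =>
        show (yx:ℝ) ≤ (y2:ℝ)
        rw [hyx, hy2]
        exact mul_le_mul_of_nonneg_left hminle hMR.le
      | some (j, false) => exact (hall (α j) (hαmem j)).1
      | some (j, true) => exact (hall (α j) (hαmem j)).2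
    · rcases hstrict with ⟨β, hβ, hor⟩ | hlt
      · rcases hor with h | h
        · obtain ⟨j, hj⟩ := (hpiece (fun β => L β y - L β x) (hgL x y)
            (fun j => sub_nonneg.2 (hall (α j) (hαmem j)).1)).2 β hβ (by simpa [sub_pos] using h)
          exact ⟨some (j, false), by simpa [sub_pos] using hj⟩
        · obtain ⟨j, hj⟩ := (hpiece (fun β => U β y - U β x) (hgU x y)
            (fun j => sub_nonneg.2 (hall (α j) (hαmem j)).2)).2 β hβ (by simpa [sub_pos] using h)
          exact ⟨some (j, true), by simpa [sub_pos] using hj⟩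
      · refine ⟨none, ?_⟩
        show (yx:ℝ) < (y2:ℝ)
        rw [hyx, hy2]
        exact mul_lt_mul_of_pos_left hlt hMR
end
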